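/- Suppose Assumption 1 (full rank) holds. Then Assumption 2 (no separation) holds if and only if the minimum of the quadratic program min_{u,c} u'u subject to u = ∑_{i=1}^n ∑_{d∈B_i} c_{i,d} v_{i,d} and c_{i,d} ≥ 1 for all i and all d ∈ B_i equals zero; equivalently, if and only if there exist real coefficients c_{i,d} ≥ 1 (one for each pair (i,d) with d ∈ B_i) such that ∑_{i=1}^n ∑_{d∈B_i} c_{i,d} v_{i,d} = 0. (Theorem 2 of the paper.) -/

import Mathlib

open scoped BigOperators RealInnerProductSpace

noncomputable section

/-- Real value of a binary indicator. -/
def bval (b : Bool) : ℝ := if b then 1 else 0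

/-- The alternative set `B_i = {d ∈ {0,1}^T : ∑_t d_t = ∑_t Y_{it}}`. -/
def altSet (T : ℕ) (Yi : Fin T → Bool) : Finset (Fin T → Bool) :=
  Finset.univ.filter fun d => (∑ t, (d t).toNat) = ∑ t, (Yi t).toNat

/-- The conditional log-likelihood `log L(β)`. -/
def logL {n T p : ℕ} (X : Fin n → Fin T → EuclideanSpace ℝ (Fin p))
    (Y : Fin n → Fin T → Bool) (β : EuclideanSpace ℝ (Fin p)) : ℝ :=
  ∑ i, ((∑ t, bval (Y i t) * ⟪X i t, β⟫) -
    Real.log (∑ d ∈ altSet T (Y i), Real.exp (∑ t, bval (d t) * ⟪X i t, β⟫)))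

/-- The conditional-logit (softmax) weights `w_i(d; β)`. -/
def cweight {n T p : ℕ} (X : Fin n → Fin T → EuclideanSpace ℝ (Fin p))
    (Y : Fin n → Fin T → Bool) (i : Fin n) (d : Fin T → Bool)
    (β : EuclideanSpace ℝ (Fin p)) : ℝ :=
  Real.exp (∑ t, bval (d t) * ⟪X i t, β⟫) /
    ∑ f ∈ altSet T (Y i), Real.exp (∑ t, bval (f t) * ⟪X i t, β⟫)

/-- Row index set of the matrix in Assumption 1: pairs `(i, d)` with `d ∈ B_i`. -/
abbrev RowIdx (n T : ℕ) (Y : Fin n → Fin T → Bool) :=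
  (i : Fin n) × {d : Fin T → Bool // d ∈ altSet T (Y i)}

/-- The matrix of Assumption 1, evaluated at `β`. -/
def rowMat {n T p : ℕ} (X : Fin n → Fin T → EuclideanSpace ℝ (Fin p))
    (Y : Fin n → Fin T → Bool) (β : EuclideanSpace ℝ (Fin p)) :
    Matrix (RowIdx n T Y) (Fin p) ℝ :=
  fun r k =>
    (∑ t, bval (r.2.1 t) * X r.1 t k) -
      ∑ e ∈ altSet T (Y r.1),
        cweight X Y r.1 e β * ∑ t, bval (e t) * X r.1 t k

/-- Assumption 1 (full rank). -/
def Assumption1 {n T p : ℕ} (X : Fin n → Fin T → EuclideanSpace ℝ (Fin p))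
    (Y : Fin n → Fin T → Bool) : Prop :=
  ∀ β : EuclideanSpace ℝ (Fin p), (rowMat X Y β).rank = p

/-- Assumption 2 (no separation). -/
def Assumption2 {n T p : ℕ} (X : Fin n → Fin T → EuclideanSpace ℝ (Fin p))
    (Y : Fin n → Fin T → Bool) : Prop :=
  ¬ ∃ βstar : EuclideanSpace ℝ (Fin p), βstar ≠ 0 ∧
      ∀ i, ∀ d ∈ altSet T (Y i),
        0 ≤ ∑ t, (bval (d t) - bval (Y i t)) * ⟪X i t, βstar⟫

/-- The vectors `v_{i,d} = ∑_t (d_t − Y_{it}) X_{it}`. -/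
def vvec {n T p : ℕ} (X : Fin n → Fin T → EuclideanSpace ℝ (Fin p))
    (Y : Fin n → Fin T → Bool) (i : Fin n) (d : Fin T → Bool) :
    EuclideanSpace ℝ (Fin p) :=
  ∑ t, (bval (d t) - bval (Y i t)) • X i t


/-- Cone over a finset of an independent subfamily is closed. -/
theorem isClosed_coneOn {ι : Type*} [Fintype ι] (v : ι → EuclideanSpace ℝ (Fin p)) (s : Finset ι)
    (hli : LinearIndependent ℝ (fun j : s => v j)) :
    IsClosed {x : EuclideanSpace ℝ (Fin p) | ∃ t : ι → ℝ, (∀ j ∈ s, 0 ≤ t j) ∧ x = ∑ j ∈ s, t j • v j} := by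
  classical
  let f : (s → ℝ) →ₗ[ℝ] EuclideanSpace ℝ (Fin p) :=
    { toFun := fun t => ∑ j : s, t j • v j
      map_add' := by intro a b; simp [add_smul, Finset.sum_add_distrib]
      map_smul' := by intro a b; simp [smul_smul, Finset.smul_sum] }
  have hker : LinearMap.ker f = ⊥ := by
    rw [LinearMap.ker_eq_bot']
    intro t ht
    have := Fintype.linearIndependent_iff.mp hli t ht
    funext j
    exact this j
  have hce := LinearMap.isClosedEmbedding_of_injective hker
  have hset : {x : EuclideanSpace ℝ (Fin p) | ∃ t : ι → ℝ, (∀ j ∈ s, 0 ≤ t j) ∧ x = ∑ j ∈ s, t j • v j}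
      = f '' {t : s → ℝ | ∀ j, 0 ≤ t j} := by
    ext x
    constructor
    · rintro ⟨t, ht0, rfl⟩
      refine ⟨fun j => t j, fun j => ht0 j j.2, ?_⟩
      show (∑ j : s, t j • v j) = _
      rw [← Finset.sum_attach s (fun j => t j • v j)]
      rfl
    · rintro ⟨t, ht0, rfl⟩
      refine ⟨fun j => if h : j ∈ s then t ⟨j, h⟩ else 0, ?_, ?_⟩
      · intro j hj; simp [hj]; exact ht0 ⟨j, hj⟩
      · show _ = ∑ j ∈ s, _
        rw [← Finset.sum_attach s (fun j => (if h : j ∈ s then t ⟨j, h⟩ else 0) • v j)]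
        show (∑ j : s, t j • v j) = _
        apply Finset.sum_congr rfl
        intro j _
        simp [j.2]
  rw [hset]
  apply hce.isClosedMap
  · have : {t : s → ℝ | ∀ j, 0 ≤ t j} = ⋂ j : s, {t : s → ℝ | 0 ≤ t j} := by
      ext t; simp [Set.mem_iInter]
    rw [this]
    exact isClosed_iInter fun j => isClosed_le continuous_const (continuous_apply j)

theorem carath {ι : Type*} [Fintype ι] (v : ι → EuclideanSpace ℝ (Fin p)) :
    ∀ (k : ℕ) (s : Finset ι), s.card ≤ k →
    ∀ x : EuclideanSpace ℝ (Fin p), (∃ t : ι → ℝ, (∀ j ∈ s, 0 ≤ t j) ∧ x = ∑ j ∈ s, t j • v j) →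
    ∃ s' : Finset ι, LinearIndependent ℝ (fun j : s' => v j) ∧
      ∃ t : ι → ℝ, (∀ j ∈ s', 0 ≤ t j) ∧ x = ∑ j ∈ s', t j • v j := by
  classical
  intro k
  induction k with
  | zero =>
    intro s hs x hx
    refine ⟨s, ?_, hx⟩
    have hse : s = ∅ := Finset.card_eq_zero.mp (Nat.le_zero.mp hs)
    subst hse
    have : IsEmpty ((∅ : Finset ι) : Finset ι) := ⟨fun ⟨_, h⟩ => by simp at h⟩
    exact linearIndependent_empty_type
  | succ k ih =>
    intro s hs x hx
    by_cases hli : LinearIndependent ℝ (fun j : s => v j)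
    · exact ⟨s, hli, hx⟩
    obtain ⟨t, ht0, rfl⟩ := hx
    obtain ⟨g, hg0, i1, hgi1⟩ := Fintype.not_linearIndependent_iff.mp hli
    -- extend g to ι (with appropriate sign)
    have hsign : ∃ gg : ι → ℝ, (∑ j ∈ s, gg j • v j = 0) ∧ ∃ j ∈ s, 0 < gg j := by
      set g1 : ι → ℝ := fun j => if h : j ∈ s then g ⟨j, h⟩ else 0 with hg1
      have hgsum : ∑ j ∈ s, g1 j • v j = 0 := by
        rw [← Finset.sum_attach s (fun j => g1 j • v j), ← hg0]
        apply Finset.sum_congr rfl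
        intro j _
        simp [hg1, j.2]
      rcases lt_or_gt_of_ne hgi1 with hneg | hpos
      · refine ⟨-g1, ?_, ⟨i1, i1.2, ?_⟩⟩
        · simp only [Pi.neg_apply, neg_smul, Finset.sum_neg_distrib, hgsum, neg_zero]
        · simp only [Pi.neg_apply, hg1]
          rw [dif_pos i1.2]
          simpa using hneg
      · refine ⟨g1, hgsum, ⟨i1, i1.2, ?_⟩⟩
        simp only [hg1]
        rw [dif_pos i1.2]
        simpa using hpos
    obtain ⟨gg, hsum, j0, hj0s, hj0pos⟩ := hsign
    set P : Finset ι := s.filter (fun j => 0 < gg j) with hP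
    have hPne : P.Nonempty := ⟨j0, by simp [hP, hj0s, hj0pos]⟩
    obtain ⟨i0, hi0P, hi0min⟩ := P.exists_min_image (fun j => t j / gg j) hPne
    have hi0s : i0 ∈ s := (Finset.mem_filter.mp hi0P).1
    have hi0pos : 0 < gg i0 := (Finset.mem_filter.mp hi0P).2
    set r : ℝ := t i0 / gg i0 with hr
    have hr0 : 0 ≤ r := div_nonneg (ht0 i0 hi0s) hi0pos.le
    set t' : ι → ℝ := fun j => t j - r * gg j with ht'
    have ht'0 : ∀ j ∈ s, 0 ≤ t' j := by
      intro j hj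
      simp only [ht', sub_nonneg]
      rcases le_or_gt (gg j) 0 with hgle | hgpos
      · calc r * gg j ≤ 0 := mul_nonpos_of_nonneg_of_nonpos hr0 hgle
          _ ≤ t j := ht0 j hj
      · have hjP : j ∈ P := Finset.mem_filter.mpr ⟨hj, hgpos⟩
        have := hi0min j hjP
        calc r * gg j ≤ (t j / gg j) * gg j := by
              apply mul_le_mul_of_nonneg_right this hgpos.le
          _ = t j := div_mul_cancel₀ _ hgpos.ne'
    have ht'i0 : t' i0 = 0 := by
      simp only [ht', hr]
      field_simp
      ring
    have hxsum : (∑ j ∈ s, t j • v j) = ∑ j ∈ s.erase i0, t' j • v j := by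
      have h1 : ∑ j ∈ s, t' j • v j = ∑ j ∈ s, t j • v j - r • ∑ j ∈ s, gg j • v j := by
        rw [Finset.smul_sum, ← Finset.sum_sub_distrib]
        apply Finset.sum_congr rfl
        intro j _
        simp [ht', sub_smul, smul_smul]
      rw [← Finset.add_sum_erase s (fun j => t' j • v j) hi0s] at h1
      rw [ht'i0] at h1
      simp only [zero_smul, zero_add, hsum, smul_zero, sub_zero] at h1
      exact h1.symm
    have hcard : (s.erase i0).card ≤ k := by
      have := Finset.card_erase_of_mem hi0s
      omega
    exact ih (s.erase i0) hcard _ ⟨t', fun j hj => ht'0 j (Finset.mem_of_mem_erase hj), hxsum⟩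

theorem isClosed_coneFull {ι : Type*} [Fintype ι] (v : ι → EuclideanSpace ℝ (Fin p))
    (hcl : ∀ s : Finset ι, LinearIndependent ℝ (fun j : s => v j) →
      IsClosed {x : EuclideanSpace ℝ (Fin p) | ∃ t : ι → ℝ, (∀ j ∈ s, 0 ≤ t j) ∧ x = ∑ j ∈ s, t j • v j})
    (hca : ∀ (s : Finset ι) (x : EuclideanSpace ℝ (Fin p)),
      (∃ t : ι → ℝ, (∀ j ∈ s, 0 ≤ t j) ∧ x = ∑ j ∈ s, t j • v j) →
      ∃ s' : Finset ι, LinearIndependent ℝ (fun j : s' => v j) ∧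
        ∃ t : ι → ℝ, (∀ j ∈ s', 0 ≤ t j) ∧ x = ∑ j ∈ s', t j • v j) :
    IsClosed {x : EuclideanSpace ℝ (Fin p) | ∃ t : ι → ℝ, (∀ j, 0 ≤ t j) ∧ x = ∑ j, t j • v j} := by
  classical
  have hEq : {x : EuclideanSpace ℝ (Fin p) | ∃ t : ι → ℝ, (∀ j, 0 ≤ t j) ∧ x = ∑ j, t j • v j}
      = ⋃ s ∈ {s : Finset ι | LinearIndependent ℝ (fun j : s => v j)},
          {x : EuclideanSpace ℝ (Fin p) | ∃ t : ι → ℝ, (∀ j ∈ s, 0 ≤ t j) ∧ x = ∑ j ∈ s, t j • v j} := by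
    ext x
    simp only [Set.mem_setOf_eq, Set.mem_iUnion]
    constructor
    · rintro ⟨t, ht0, rfl⟩
      obtain ⟨s', hs', ht'⟩ := hca Finset.univ _ ⟨t, fun j _ => ht0 j, rfl⟩
      exact ⟨s', hs', ht'⟩
    · rintro ⟨s, hs, t, ht0, rfl⟩
      refine ⟨fun j => if j ∈ s then t j else 0, fun j => ?_, ?_⟩
      · by_cases h : j ∈ s
        · simpa [h] using ht0 j h
        · simp [h]
      · have h1 : ∀ j ∈ Finset.univ, (if j ∈ s then t j else 0) • v j
            = if j ∈ s then t j • v j else 0 := by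
          intro j _
          by_cases h : j ∈ s <;> simp [h]
        rw [Finset.sum_congr rfl h1, Finset.sum_ite_mem, Finset.univ_inter]
  rw [hEq]
  exact Set.Finite.isClosed_biUnion (Set.toFinite _) (fun s hs => hcl s hs)
theorem mem_altSet_self {T : ℕ} (Yi : Fin T → Bool) : Yi ∈ altSet T Yi := by
  simp [altSet]

theorem inner_vvec {n T p : ℕ} (X : Fin n → Fin T → EuclideanSpace ℝ (Fin p))
    (Y : Fin n → Fin T → Bool) (i : Fin n) (d : Fin T → Bool)
    (β : EuclideanSpace ℝ (Fin p)) :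
    ⟪vvec X Y i d, β⟫ = ∑ t, (bval (d t) - bval (Y i t)) * ⟪X i t, β⟫ := by
  rw [vvec, sum_inner]
  exact Finset.sum_congr rfl fun t _ => real_inner_smul_left _ _ _

theorem cweight_sum_one {n T p : ℕ} (X : Fin n → Fin T → EuclideanSpace ℝ (Fin p))
    (Y : Fin n → Fin T → Bool) (i : Fin n) (β : EuclideanSpace ℝ (Fin p)) :
    ∑ e ∈ altSet T (Y i), cweight X Y i e β = 1 := by
  have hD : 0 < ∑ f ∈ altSet T (Y i), Real.exp (∑ t, bval (f t) * ⟪X i t, β⟫) :=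
    Finset.sum_pos (fun f _ => Real.exp_pos _) ⟨Y i, mem_altSet_self (Y i)⟩
  simp only [cweight]
  rw [← Finset.sum_div]
  exact div_self hD.ne'

theorem span_full {n T p : ℕ} (X : Fin n → Fin T → EuclideanSpace ℝ (Fin p))
    (Y : Fin n → Fin T → Bool) (h1 : Assumption1 X Y)
    (β : EuclideanSpace ℝ (Fin p))
    (hz : ∀ (i : Fin n), ∀ d ∈ altSet T (Y i), ⟪vvec X Y i d, β⟫ = 0) :
    β = 0 := by
  classical
  set A := rowMat X Y 0 with hA
  -- inner of X i t with β in coordinates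
  have hinn : ∀ (i : Fin n) (t : Fin T), ⟪X i t, β⟫ = ∑ k, X i t k * β k := by
    intro i t
    simp [PiLp.inner_apply, RCLike.inner_apply, conj_trivial]
    exact Finset.sum_congr rfl fun _ _ => mul_comm _ _
  -- the "ip" quantity
  have hip : ∀ (i : Fin n) (d : Fin T → Bool),
      ∑ k, (∑ t, bval (d t) * X i t k) * β k = ∑ t, bval (d t) * ⟪X i t, β⟫ := by
    intro i d
    simp only [hinn, Finset.sum_mul, Finset.mul_sum]
    rw [Finset.sum_comm]
    apply Finset.sum_congr rfl; intro t _
    apply Finset.sum_congr rfl; intro k _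
    ring
  -- mulVec of coordinate vector of β is zero
  set b : Fin p → ℝ := fun k => β k with hb
  have hmul : A.mulVecLin b = 0 := by
    funext r
    obtain ⟨i, d, hd⟩ := r
    have hq : ∀ e ∈ altSet T (Y i),
        ∑ t, bval (e t) * ⟪X i t, β⟫ = ∑ t, bval (Y i t) * ⟪X i t, β⟫ := by
      intro e he
      have := hz i e he
      rw [inner_vvec] at this
      simp only [sub_mul, Finset.sum_sub_distrib, sub_eq_zero] at this
      exact this
    show ∑ k, A ⟨i, d, hd⟩ k * b k = 0
    have : ∑ k, A ⟨i, d, hd⟩ k * b k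
        = (∑ t, bval (d t) * ⟪X i t, β⟫)
          - ∑ e ∈ altSet T (Y i), cweight X Y i e 0 * ∑ t, bval (e t) * ⟪X i t, β⟫ := by
      simp only [hA, rowMat, sub_mul, Finset.sum_sub_distrib, hb]
      congr 1
      · exact hip i d
      · simp only [Finset.sum_mul]
        rw [Finset.sum_comm]
        apply Finset.sum_congr rfl; intro e _
        rw [← hip i e, Finset.mul_sum]
        apply Finset.sum_congr rfl; intro k _
        ring
    have h2 : ∑ e ∈ altSet T (Y i), cweight X Y i e 0 * ∑ t, bval (e t) * ⟪X i t, β⟫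
        = ∑ e ∈ altSet T (Y i), cweight X Y i e 0 * ∑ t, bval (Y i t) * ⟪X i t, β⟫ :=
      Finset.sum_congr rfl (fun e he => by rw [hq e he])
    rw [this, hq d hd, h2, ← Finset.sum_mul, cweight_sum_one, one_mul, sub_self]
  -- rank implies injectivity
  have hrank := h1 0
  have hfin : Module.finrank ℝ (LinearMap.range A.mulVecLin)
      + Module.finrank ℝ (LinearMap.ker A.mulVecLin) = p := by
    rw [LinearMap.finrank_range_add_finrank_ker]
    simp [Module.finrank_pi]
  have hker0 : Module.finrank ℝ (LinearMap.ker A.mulVecLin) = 0 := by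
    have h3 : Matrix.rank A = Module.finrank ℝ (LinearMap.range A.mulVecLin) := rfl
    rw [h3] at hrank
    omega
  have hkerbot : LinearMap.ker A.mulVecLin = ⊥ :=
    Submodule.finrank_eq_zero.mp hker0
  have hb0 : b = 0 := by
    have : b ∈ LinearMap.ker A.mulVecLin := hmul
    rw [hkerbot] at this
    simpa using this
  ext k
  exact congrFun hb0 k
/-- Separation: if `0` is not in the shifted cone `S`, there is a separating vector. -/
theorem exists_sep {ι : Type*} [Fintype ι] (v : ι → EuclideanSpace ℝ (Fin p))
    (h0 : ¬ ∃ c : ι → ℝ, (∀ j, 1 ≤ c j) ∧ ∑ j, c j • v j = 0) :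
    ∃ u : EuclideanSpace ℝ (Fin p), u ≠ 0 ∧ ∀ j, 0 ≤ ⟪v j, u⟫ := by
  classical
  set S : Set (EuclideanSpace ℝ (Fin p)) :=
    {x | ∃ c : ι → ℝ, (∀ j, 1 ≤ c j) ∧ x = ∑ j, c j • v j} with hS
  set s0 : EuclideanSpace ℝ (Fin p) := ∑ j, v j with hs0
  have hSC : S = (fun x => x - s0) ⁻¹'
      {x : EuclideanSpace ℝ (Fin p) | ∃ t : ι → ℝ, (∀ j, 0 ≤ t j) ∧ x = ∑ j, t j • v j} := by
    ext x
    simp only [hS, Set.mem_setOf_eq, Set.mem_preimage]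
    constructor
    · rintro ⟨c, hc, rfl⟩
      refine ⟨fun j => c j - 1, fun j => by dsimp only; linarith [hc j], ?_⟩
      simp [sub_smul, Finset.sum_sub_distrib, hs0]
    · rintro ⟨t, ht, hx⟩
      refine ⟨fun j => t j + 1, fun j => by dsimp only; linarith [ht j], ?_⟩
      have : x = (∑ j, t j • v j) + s0 := by
        rw [← hx]; abel
      rw [this]
      simp [add_smul, Finset.sum_add_distrib, hs0]
  have hclosed : IsClosed S := by
    rw [hSC]
    exact (isClosed_coneFull v (fun s hs => isClosed_coneOn v s hs)
      (fun s x hx => carath v s.card s le_rfl x hx)).preimage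
      (continuous_id.sub continuous_const)
  have hconv : Convex ℝ S := by
    rintro x ⟨c, hc, rfl⟩ y ⟨c', hc', rfl⟩ a b ha hb hab
    refine ⟨fun j => a * c j + b * c' j, fun j => ?_, ?_⟩
    · have h1 : a * 1 + b * 1 ≤ a * c j + b * c' j := by
        apply add_le_add
        · exact mul_le_mul_of_nonneg_left (hc j) ha
        · exact mul_le_mul_of_nonneg_left (hc' j) hb
      simpa [hab] using h1.trans_eq' (by linarith)
    · simp only [Finset.smul_sum, ← Finset.sum_add_distrib, add_smul, mul_smul]
  have hne : S.Nonempty := ⟨s0, fun _ => (1:ℝ), fun _ => le_refl 1, by simp [hs0]⟩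
  have h0S : (0 : EuclideanSpace ℝ (Fin p)) ∉ S := by
    intro ⟨c, hc, hcs⟩
    exact h0 ⟨c, hc, hcs.symm⟩
  obtain ⟨u, huS, hmin⟩ :=
    exists_norm_eq_iInf_of_complete_convex hne (hclosed.isComplete) hconv 0
  rw [norm_eq_iInf_iff_real_inner_le_zero hconv huS] at hmin
  refine ⟨u, fun h => h0S (h ▸ huS), fun j => ?_⟩
  obtain ⟨c, hc, hu⟩ := huS
  have hwS : u + v j ∈ S := by
    refine ⟨fun j' => c j' + if j' = j then 1 else 0, fun j' => ?_, ?_⟩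
    · by_cases h : j' = j <;> simp [h] <;> linarith [hc j', hc j]
    · simp only [add_smul, Finset.sum_add_distrib, ite_smul, one_smul, zero_smul]
      rw [Finset.sum_ite_eq' Finset.univ j v]
      simp [hu]
  have := hmin _ hwS
  have h2 : ⟪(0 : EuclideanSpace ℝ (Fin p)) - u, (u + v j) - u⟫ = -⟪u, v j⟫ := by
    simp [inner_sub_left]
  rw [h2] at this
  rw [real_inner_comm]
  linarith

/-- Theorem 2: under full rank, no separation holds iff the minimum of the quadratic
program is zero, equivalently iff some coefficients `c_{i,d} ≥ 1` make `∑ c_{i,d} v_{i,d} = 0`. -/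
theorem stmt3 {n T p : ℕ} (hn : 1 ≤ n) (hT : 1 ≤ T) (hp : 1 ≤ p)
    (X : Fin n → Fin T → EuclideanSpace ℝ (Fin p)) (Y : Fin n → Fin T → Bool)
    (h1 : Assumption1 X Y) :
    (Assumption2 X Y ↔
      sInf {r : ℝ | ∃ c : RowIdx n T Y → ℝ, (∀ j, 1 ≤ c j) ∧
        r = ‖∑ j : RowIdx n T Y, c j • vvec X Y j.1 j.2.1‖ ^ 2} = 0) ∧
    (Assumption2 X Y ↔
      ∃ c : RowIdx n T Y → ℝ, (∀ j, 1 ≤ c j) ∧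
        ∑ j : RowIdx n T Y, c j • vvec X Y j.1 j.2.1 = 0) := by
  classical
  set v : RowIdx n T Y → EuclideanSpace ℝ (Fin p) := fun j => vvec X Y j.1 j.2.1 with hv
  have hv0 : ∀ β : EuclideanSpace ℝ (Fin p), (∀ j : RowIdx n T Y, ⟪v j, β⟫ = 0) → β = 0 :=
    fun β h => span_full X Y h1 β (fun i d hd => h ⟨i, ⟨d, hd⟩⟩)
  have hA2 : Assumption2 X Y ↔
      ¬ ∃ β : EuclideanSpace ℝ (Fin p), β ≠ 0 ∧ ∀ j : RowIdx n T Y, 0 ≤ ⟪v j, β⟫ := by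
    unfold Assumption2
    apply not_congr
    apply exists_congr; intro β
    apply and_congr_right; intro _
    constructor
    · rintro h ⟨i, d, hd⟩
      rw [hv]
      rw [inner_vvec]
      exact h i d hd
    · intro h i d hd
      have := h ⟨i, ⟨d, hd⟩⟩
      rwa [hv, inner_vvec] at this
  -- P → Assumption2
  have key1 : (∃ c : RowIdx n T Y → ℝ, (∀ j, 1 ≤ c j) ∧ ∑ j : RowIdx n T Y, c j • v j = 0) →
      Assumption2 X Y := by
    rintro ⟨c, hc, hsum⟩
    rw [hA2]
    rintro ⟨β, hβ, hpos⟩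
    have hzero : ∑ j : RowIdx n T Y, c j * ⟪v j, β⟫ = 0 := by
      have : ⟪∑ j : RowIdx n T Y, c j • v j, β⟫ = (0:ℝ) := by rw [hsum, inner_zero_left]
      rw [sum_inner] at this
      rw [← this]
      exact Finset.sum_congr rfl fun j _ => (real_inner_smul_left _ _ _).symm
    have hterm : ∀ j : RowIdx n T Y, c j * ⟪v j, β⟫ = 0 := by
      have hnn : ∀ j ∈ Finset.univ, (0:ℝ) ≤ c j * ⟪v j, β⟫ :=
        fun j _ => mul_nonneg (le_trans zero_le_one (hc j)) (hpos j)
      intro j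
      exact (Finset.sum_eq_zero_iff_of_nonneg hnn).mp hzero j (Finset.mem_univ j)
    apply hβ
    apply hv0
    intro j
    have h1j := hterm j
    have h2j : c j ≠ 0 := by have := hc j; intro h; rw [h] at this; linarith
    exact (mul_eq_zero.mp h1j).resolve_left h2j
  -- Assumption2 → P
  have key2 : Assumption2 X Y →
      ∃ c : RowIdx n T Y → ℝ, (∀ j, 1 ≤ c j) ∧ ∑ j : RowIdx n T Y, c j • v j = 0 := by
    intro h2
    by_contra hP
    obtain ⟨u, hu0, hupos⟩ := exists_sep v hP
    exact (hA2.mp h2) ⟨u, hu0, hupos⟩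
  have hiff2 : Assumption2 X Y ↔
      ∃ c : RowIdx n T Y → ℝ, (∀ j, 1 ≤ c j) ∧ ∑ j : RowIdx n T Y, c j • v j = 0 :=
    ⟨key2, key1⟩
  refine ⟨?_, hiff2⟩
  set R : Set ℝ := {r : ℝ | ∃ c : RowIdx n T Y → ℝ, (∀ j, 1 ≤ c j) ∧
      r = ‖∑ j : RowIdx n T Y, c j • v j‖ ^ 2} with hR
  have hRne : R.Nonempty := ⟨‖∑ j : RowIdx n T Y, v j‖ ^ 2,
    fun _ => (1:ℝ), fun _ => le_refl 1, by simp⟩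
  have hRnn : ∀ r ∈ R, (0:ℝ) ≤ r := by
    rintro r ⟨c, hc, rfl⟩
    positivity
  constructor
  · intro h2
    obtain ⟨c, hc, hsum⟩ := hiff2.mp h2
    have hmem : (0:ℝ) ∈ R := ⟨c, hc, by rw [hsum]; simp⟩
    exact le_antisymm (csInf_le ⟨0, hRnn⟩ hmem) (le_csInf hRne hRnn)
  · intro hinf
    by_contra h2
    rw [hA2] at h2
    push_neg at h2
    obtain ⟨β, hβ0, hβpos⟩ := not_not.mp (by simpa using h2)
    have hβn : (0:ℝ) < ‖β‖ := by
      rw [norm_pos_iff]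
      exact hβ0
    have hex : ∃ j0 : RowIdx n T Y, ⟪v j0, β⟫ ≠ 0 := by
      by_contra hall
      push_neg at hall
      exact hβ0 (hv0 β hall)
    obtain ⟨j0, hj0⟩ := hex
    have hε : (0:ℝ) < ⟪v j0, β⟫ := lt_of_le_of_ne (hβpos j0) (Ne.symm hj0)
    set ε : ℝ := ⟪v j0, β⟫ with hεdef
    have hδpos : (0:ℝ) < (ε / ‖β‖) ^ 2 := by positivity
    have hbound : ∀ r ∈ R, (ε / ‖β‖) ^ 2 ≤ r := by
      rintro r ⟨c, hc, rfl⟩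
      have hsum_ip : ⟪∑ j : RowIdx n T Y, c j • v j, β⟫ = ∑ j : RowIdx n T Y, c j * ⟪v j, β⟫ := by
        rw [sum_inner]
        exact Finset.sum_congr rfl fun j _ => real_inner_smul_left _ _ _
      have hj0le : ε ≤ c j0 * ⟪v j0, β⟫ := le_mul_of_one_le_left hε.le (hc j0)
      have hsingle : c j0 * ⟪v j0, β⟫ ≤ ∑ j : RowIdx n T Y, c j * ⟪v j, β⟫ :=
        Finset.single_le_sum (fun j _ => mul_nonneg (zero_le_one.trans (hc j)) (hβpos j))
          (Finset.mem_univ j0)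
      have hcs : ⟪∑ j : RowIdx n T Y, c j • v j, β⟫ ≤ ‖∑ j : RowIdx n T Y, c j • v j‖ * ‖β‖ :=
        real_inner_le_norm _ _
      have h5 : ε ≤ ‖∑ j : RowIdx n T Y, c j • v j‖ * ‖β‖ := by
        calc ε ≤ c j0 * ⟪v j0, β⟫ := hj0le
          _ ≤ ∑ j : RowIdx n T Y, c j * ⟪v j, β⟫ := hsingle
          _ = ⟪∑ j : RowIdx n T Y, c j • v j, β⟫ := hsum_ip.symm
          _ ≤ _ := hcs
      have h6 : ε / ‖β‖ ≤ ‖∑ j : RowIdx n T Y, c j • v j‖ := by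
        rw [div_le_iff₀ hβn]
        exact h5
      calc (ε / ‖β‖) ^ 2 ≤ ‖∑ j : RowIdx n T Y, c j • v j‖ ^ 2 :=
            pow_le_pow_left₀ (by positivity) h6 2
        _ = _ := rfl
    have : (ε / ‖β‖) ^ 2 ≤ sInf R := le_csInf hRne hbound
    rw [hinf] at this
    linarith
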